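/- Let a ∈ L^∞(ℝ) be invertible in L^∞(ℝ) (i.e. a⁻¹ ∈ L^∞(ℝ)), and suppose the Wiener–Hopf operator W(a ã⁻¹) is invertible on L²(ℝ⁺). Then the operator W(a)+H(a) is invertible on L²(ℝ⁺) and (W(a)+H(a))⁻¹ = (W(ã⁻¹) + H(a⁻¹))∘W(a ã⁻¹)⁻¹. -/

import Mathlib

open MeasureTheory Complex Filter Set

noncomputable section

namespace WienerHopf

/-- The space `L²(ℝ;ℂ)`. -/
abbrev L2 : Type := Lp ℂ 2 (volume : Measure ℝ)

open Classical in
/-- Multiplication by a function `a : ℝ → ℂ`, as a bounded operator on `L²(ℝ)`.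
(It is defined to be `0` in the degenerate case where `a` is not essentially bounded.) -/
def mul (a : ℝ → ℂ) : L2 →L[ℂ] L2 :=
  if h : MemLp a ⊤ (volume : Measure ℝ) then
    LinearMap.mkContinuous
      { toFun := fun f => ((Lp.memLp f).smul (r := 2) h).toLp (a • (f : ℝ → ℂ))
        map_add' := by
          intro f g
          rw [← MemLp.toLp_add]
          apply Lp.ext
          filter_upwards [MemLp.coeFn_toLp ((Lp.memLp (f + g)).smul (r := 2) h),
            MemLp.coeFn_toLp (((Lp.memLp f).smul (r := 2) h).add
              ((Lp.memLp g).smul (r := 2) h)),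
            Lp.coeFn_add f g] with t h1 h2 h3
          rw [h1, h2]
          simp only [Pi.smul_apply, smul_eq_mul, Pi.mul_apply, Pi.add_apply]
          rw [h3]
          simp [Pi.add_apply, mul_add]
        map_smul' := by
          intro m f
          simp only [RingHom.id_apply]
          rw [← MemLp.toLp_const_smul]
          apply Lp.ext
          filter_upwards [MemLp.coeFn_toLp ((Lp.memLp (m • f)).smul (r := 2) h),
            MemLp.coeFn_toLp (((Lp.memLp f).smul (r := 2) h).const_smul m),
            Lp.coeFn_smul m f] with t h1 h2 h3
          rw [h1, h2]
          simp only [Pi.smul_apply, smul_eq_mul, Pi.mul_apply]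
          rw [h3]
          simp only [Pi.smul_apply, smul_eq_mul]
          ring
        }
      (eLpNorm a ⊤ (volume : Measure ℝ)).toReal
      (by
        intro f
        simp only [LinearMap.coe_mk, AddHom.coe_mk]
        rw [Lp.norm_toLp, Lp.norm_def]
        have hle := eLpNorm_smul_le_mul_eLpNorm (Lp.aestronglyMeasurable f) h.1
          (p := ⊤) (q := 2) (r := 2)
        calc (eLpNorm (a • (f : ℝ → ℂ)) 2 (volume : Measure ℝ)).toReal
            ≤ (eLpNorm a ⊤ (volume : Measure ℝ) * eLpNorm (f : ℝ → ℂ) 2 volume).toReal := by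
              apply ENNReal.toReal_mono _ hle
              exact ENNReal.mul_ne_top h.2.ne (Lp.eLpNorm_lt_top f).ne
          _ = (eLpNorm a ⊤ (volume : Measure ℝ)).toReal *
              (eLpNorm (f : ℝ → ℂ) 2 (volume : Measure ℝ)).toReal := ENNReal.toReal_mul)
  else 0

theorem mul_coeFn {a : ℝ → ℂ} (h : MemLp a ⊤ (volume : Measure ℝ)) (f : L2) :
    (mul a f : ℝ → ℂ) =ᵐ[volume] fun t => a t * f t := by
  rw [mul, dif_pos h]
  show ⇑(((Lp.memLp f).smul (r := 2) h).toLp (a • (f : ℝ → ℂ))) =ᵐ[volume]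
    fun t => a t * f t
  exact (MemLp.coeFn_toLp _).trans
    (Eventually.of_forall fun t => by simp [Pi.smul_apply])

/-- `(-t)`-reflection is measure preserving. -/
theorem negMP : MeasurePreserving (fun t : ℝ => -t) volume volume :=
  Measure.measurePreserving_neg (volume : Measure ℝ)

/-- The reflection operator `(Jφ)(t) = φ(-t)` on `L²(ℝ)`. -/
def reflect : L2 →L[ℂ] L2 :=
  LinearMap.mkContinuous
    { toFun := ⇑(Lp.compMeasurePreserving (fun t : ℝ => -t) negMP)
      map_add' := fun f g => map_add _ f g
      map_smul' := by
        intro m g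
        simp only [RingHom.id_apply]
        apply Lp.ext
        filter_upwards [Lp.coeFn_compMeasurePreserving (f := fun t : ℝ => -t) (m • g) negMP,
          Lp.coeFn_smul m (Lp.compMeasurePreserving (fun t : ℝ => -t) negMP g),
          Lp.coeFn_compMeasurePreserving (f := fun t : ℝ => -t) g negMP,
          negMP.quasiMeasurePreserving.ae_eq_comp (Lp.coeFn_smul m g)] with t h1 h2 h3 h4
        rw [h1, h2, h4]
        simp only [Function.comp_apply, Pi.smul_apply, smul_eq_mul]
        rw [h3]
        simp only [Function.comp_apply]
      }
    1
    (by
      intro g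
      rw [one_mul]
      exact le_of_eq (Lp.norm_compMeasurePreserving g _))

theorem reflect_coeFn (g : L2) :
    (reflect g : ℝ → ℂ) =ᵐ[volume] fun t => g (-t) :=
  Lp.coeFn_compMeasurePreserving (f := fun t : ℝ => -t) g negMP

/-- The indicator function of `(0,∞)`. -/
def chiPlus : ℝ → ℂ := Set.indicator (Set.Ioi (0 : ℝ)) (fun _ => 1)

theorem chiPlus_memℒp : MemLp chiPlus ⊤ (volume : Measure ℝ) :=
  (memLp_top_const (1 : ℂ)).indicator measurableSet_Ioi

/-- The subspace of `L²(ℝ)` consisting of functions vanishing a.e. on `(-∞,0)`;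
it is identified with `L²(ℝ⁺)`. -/
def posSubspace : Submodule ℂ L2 where
  carrier := {f : L2 | ∀ᵐ t : ℝ ∂volume, t < 0 → (f : ℝ → ℂ) t = 0}
  zero_mem' := by
    filter_upwards [Lp.coeFn_zero ℂ 2 (volume : Measure ℝ)] with t ht _
    simp [ht]
  add_mem' := by
    intro f g hf hg
    filter_upwards [hf, hg, Lp.coeFn_add f g] with t h1 h2 h3 hlt
    rw [h3]
    simp [Pi.add_apply, h1 hlt, h2 hlt]
  smul_mem' := by
    intro m f hf
    filter_upwards [hf, Lp.coeFn_smul m f] with t h1 h2 hlt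
    rw [h2]
    simp [Pi.smul_apply, h1 hlt]

/-- `L²(ℝ⁺)`, realized as the subspace of `L²(ℝ)` of functions vanishing a.e. on `(-∞,0)`. -/
abbrev Lp2Plus : Type := ↥posSubspace

theorem chiPlus_mul_mem (g : L2) : mul chiPlus g ∈ posSubspace := by
  filter_upwards [mul_coeFn chiPlus_memℒp g] with t ht hlt
  rw [ht, chiPlus, Set.indicator_of_notMem (by simpa using hlt.le), zero_mul]

/-- Compression of an operator on `L²(ℝ)` to the subspace `L²(ℝ⁺)`:
`φ ↦ χ₊ ⬝ (T φ)`. -/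
def compress (T : L2 →L[ℂ] L2) : Lp2Plus →L[ℂ] Lp2Plus :=
  LinearMap.mkContinuous
    { toFun := fun φ => ⟨mul chiPlus (T φ.val), chiPlus_mul_mem _⟩
      map_add' := by intro φ ψ; apply Subtype.ext; simp
      map_smul' := by intro m φ; apply Subtype.ext; simp }
    ‖(mul chiPlus).comp T‖
    (by intro φ; exact ((mul chiPlus).comp T).le_opNorm φ.val)

theorem compress_coe (T : L2 →L[ℂ] L2) (φ : Lp2Plus) :
    (compress T φ : L2) = mul chiPlus (T φ.val) := rfl

/-- An abstract realization of the Fourier transform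
`(𝓕φ)(ξ) = ∫ e^{iξx} φ(x) dx` on `L²(ℝ)` (together with its inverse
`(𝓕⁻¹ψ)(x) = (2π)⁻¹ ∫ e^{-iξx} ψ(ξ) dξ`): a continuous linear bijection of `L²(ℝ)`
that is given by the above integral formulas on integrable functions.  By density
of `L¹ ∩ L²` in `L²`, these properties determine the operator uniquely, and by the
Fourier–Plancherel theory such an operator exists. -/
structure FourierL2 where
  equiv : L2 ≃L[ℂ] L2
  forward : ∀ φ : L2, Integrable (φ : ℝ → ℂ) volume →
      (equiv φ : ℝ → ℂ) =ᵐ[volume]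
        fun ξ : ℝ => ∫ x : ℝ, Complex.exp (Complex.I * ξ * x) * φ x
  inverse : ∀ ψ : L2, Integrable (ψ : ℝ → ℂ) volume →
      (equiv.symm ψ : ℝ → ℂ) =ᵐ[volume]
        fun x : ℝ => (2 * Real.pi : ℂ)⁻¹ * ∫ ξ : ℝ, Complex.exp (-(Complex.I * ξ * x)) * ψ ξ

/-- `W⁰(a) = 𝓕⁻¹ M_a 𝓕`, the convolution (Fourier multiplier) operator on `L²(ℝ)`. -/
def W0 (F : FourierL2) (a : ℝ → ℂ) : L2 →L[ℂ] L2 :=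
  (F.equiv.symm : L2 →L[ℂ] L2).comp ((mul a).comp (F.equiv : L2 →L[ℂ] L2))

/-- The Wiener–Hopf operator `W(a) = χ₊ W⁰(a)` on `L²(ℝ⁺)`. -/
def W (F : FourierL2) (a : ℝ → ℂ) : Lp2Plus →L[ℂ] Lp2Plus :=
  compress (W0 F a)

/-- The Hankel operator `H(b) = χ₊ W⁰(b) J` on `L²(ℝ⁺)`. -/
def H (F : FourierL2) (b : ℝ → ℂ) : Lp2Plus →L[ℂ] Lp2Plus :=
  compress ((W0 F b).comp reflect)

/-- `a` is invertible in the Banach algebra `L^∞(ℝ)`: `a ∈ L^∞`, `a ≠ 0` a.e.,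
and the pointwise inverse `a⁻¹` again belongs to `L^∞`. -/
def InvertibleLinf (a : ℝ → ℂ) : Prop :=
  MemLp a ⊤ (volume : Measure ℝ) ∧ (∀ᵐ t : ℝ ∂volume, a t ≠ 0) ∧
    MemLp (fun t => (a t)⁻¹) ⊤ (volume : Measure ℝ)

/-- `(a,b)` is a matching pair: `a, b` are invertible in `L^∞(ℝ)` and
`a(t)a(-t) = b(t)b(-t)` for a.e. `t`. -/
def MatchingPair (a b : ℝ → ℂ) : Prop :=
  InvertibleLinf a ∧ InvertibleLinf b ∧
    ∀ᵐ t : ℝ ∂volume, a t * a (-t) = b t * b (-t)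






theorem ae_ne_zero : ∀ᵐ t : ℝ ∂(volume : Measure ℝ), t ≠ 0 := by
  rw [ae_iff]
  simpa using measure_singleton (0 : ℝ)

theorem memℒp_top_reflect {x : ℝ → ℂ} (hx : MemLp x ⊤ (volume : Measure ℝ)) :
    MemLp (fun t => x (-t)) ⊤ (volume : Measure ℝ) := by
  exact hx.comp_measurePreserving negMP

theorem memℒp_top_mul {x y : ℝ → ℂ} (hx : MemLp x ⊤ (volume : Measure ℝ))
    (hy : MemLp y ⊤ (volume : Measure ℝ)) :
    MemLp (fun t => x t * y t) ⊤ (volume : Measure ℝ) := by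
  have h := eLpNorm_smul_le_mul_eLpNorm hy.1 hx.1 (p := ⊤) (q := ⊤) (r := ⊤)
  refine ⟨hx.1.mul hy.1, ?_⟩
  have hxy : (fun t => x t * y t) = x • y := rfl
  rw [hxy]
  exact lt_of_le_of_lt h (ENNReal.mul_lt_top hx.2 hy.2)

theorem mul_congr {x y : ℝ → ℂ} (hxy : x =ᵐ[(volume : Measure ℝ)] y) : mul x = mul y := by
  by_cases hx : MemLp x ⊤ (volume : Measure ℝ)
  · have hy : MemLp y ⊤ (volume : Measure ℝ) := hx.ae_eq hxy
    ext f
    filter_upwards [mul_coeFn hx f, mul_coeFn hy f, hxy] with t h1 h2 h3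
    rw [h1, h2, h3]
  · have hy : ¬ MemLp y ⊤ (volume : Measure ℝ) := fun h => hx (h.ae_eq hxy.symm)
    rw [mul, mul, dif_neg hx, dif_neg hy]

theorem mul_mul {x y : ℝ → ℂ} (hx : MemLp x ⊤ (volume : Measure ℝ))
    (hy : MemLp y ⊤ (volume : Measure ℝ)) (f : L2) :
    mul x (mul y f) = mul (fun t => x t * y t) f := by
  apply Lp.ext
  filter_upwards [mul_coeFn hx (mul y f), mul_coeFn hy f,
    mul_coeFn (memℒp_top_mul hx hy) f] with t h1 h2 h3
  rw [h1, h2, h3, mul_assoc]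

theorem mul_one_fun : mul (fun _ : ℝ => (1 : ℂ)) = ContinuousLinearMap.id ℂ L2 := by
  ext f
  filter_upwards [mul_coeFn (memLp_top_const (1 : ℂ)) f] with t h1
  rw [h1]
  simp

theorem reflect_reflect (f : L2) : reflect (reflect f) = f := by
  apply Lp.ext
  filter_upwards [reflect_coeFn (reflect f),
    negMP.quasiMeasurePreserving.ae_eq (reflect_coeFn f)] with t h1 h2
  simp only [Function.comp_apply, neg_neg] at h2
  rw [h1, h2]

theorem reflect_mul {x : ℝ → ℂ} (hx : MemLp x ⊤ (volume : Measure ℝ)) (f : L2) :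
    reflect (mul x f) = mul (fun t => x (-t)) (reflect f) := by
  apply Lp.ext
  filter_upwards [reflect_coeFn (mul x f),
    negMP.quasiMeasurePreserving.ae_eq (mul_coeFn hx f),
    mul_coeFn (memℒp_top_reflect hx) (reflect f), reflect_coeFn f] with t h1 h2 h3 h4
  simp only [Function.comp_apply] at h2
  rw [h1, h2, h3, h4]


theorem fourier_reflect_integrable (F : FourierL2) (f : L2)
    (hf : Integrable (f : ℝ → ℂ) volume) :
    F.equiv (reflect f) = reflect (F.equiv f) := by
  have hrf : Integrable (reflect f : ℝ → ℂ) volume := by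
    refine Integrable.congr ?_ (reflect_coeFn f).symm
    exact memLp_one_iff_integrable.1
      ((memLp_one_iff_integrable.2 hf).comp_measurePreserving negMP)
  apply Lp.ext
  have h1 := F.forward (reflect f) hrf
  have h2 := F.forward f hf
  have h3 := reflect_coeFn (F.equiv f)
  have h4 := negMP.quasiMeasurePreserving.ae_eq h2
  filter_upwards [h1, h3, h4] with ξ e1 e3 e4
  simp only [Function.comp_apply] at e4
  rw [e1, e3, e4]
  -- ∫ x, exp(I ξ x) * (reflect f) x = ∫ x, exp(I (-ξ) x) * f x
  have hcongr : ∫ x : ℝ, Complex.exp (Complex.I * ξ * x) * (reflect f : ℝ → ℂ) x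
      = ∫ x : ℝ, Complex.exp (Complex.I * ξ * x) * (f : ℝ → ℂ) (-x) := by
    refine integral_congr_ae ?_
    filter_upwards [reflect_coeFn f] with x hx
    rw [hx]
  rw [hcongr]
  have hsub := negMP.integral_comp (Homeomorph.neg ℝ).measurableEmbedding
    (fun y : ℝ => Complex.exp (Complex.I * (-ξ : ℝ) * y) * (f : ℝ → ℂ) y)
  rw [← hsub]
  congr 1
  funext x
  have : (Complex.I * ((-ξ : ℝ) : ℂ) * (((fun t : ℝ => -t) x : ℝ) : ℂ))
      = Complex.I * ξ * x := by push_cast; ring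
  simp only [this]

theorem fourier_reflect (F : FourierL2) (f : L2) :
    F.equiv (reflect f) = reflect (F.equiv f) := by
  refine Lp.induction (p := 2) (by norm_num)
    (fun f : L2 => F.equiv (reflect f) = reflect (F.equiv f)) ?_ ?_ ?_ f
  · intro c s hs hμs
    apply fourier_reflect_integrable
    have hint : Integrable (s.indicator fun _ => c) volume :=
      memLp_one_iff_integrable.1 (memLp_indicator_const 1 hs c (Or.inr hμs.ne))
    refine hint.congr ?_
    refine (indicatorConstLp_coeFn (p := 2) (hs := hs) (hμs := hμs.ne) (c := c)).symm.trans ?_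
    rw [Lp.simpleFunc.coe_indicatorConst]
  · intro g1 g2 hg1 hg2 _ h1 h2
    rw [map_add, map_add, h1, h2, map_add, map_add]
  · exact isClosed_eq
      ((F.equiv.continuous).comp reflect.continuous)
      (reflect.continuous.comp F.equiv.continuous)

theorem fourier_symm_reflect (F : FourierL2) (f : L2) :
    F.equiv.symm (reflect f) = reflect (F.equiv.symm f) := by
  apply F.equiv.injective
  rw [F.equiv.apply_symm_apply, fourier_reflect F (F.equiv.symm f),
    F.equiv.apply_symm_apply]


theorem W0_apply_mul (F : FourierL2) {x y : ℝ → ℂ} (hx : MemLp x ⊤ (volume : Measure ℝ))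
    (hy : MemLp y ⊤ (volume : Measure ℝ)) (f : L2) :
    W0 F x (W0 F y f) = W0 F (fun t => x t * y t) f := by
  simp only [W0, ContinuousLinearMap.comp_apply, ContinuousLinearEquiv.coe_coe]
  rw [F.equiv.apply_symm_apply, mul_mul hx hy]

theorem W0_congr (F : FourierL2) {x y : ℝ → ℂ} (hxy : x =ᵐ[(volume : Measure ℝ)] y) :
    W0 F x = W0 F y := by
  simp only [W0, mul_congr hxy]

theorem W0_one (F : FourierL2) (f : L2) : W0 F (fun _ => (1 : ℂ)) f = f := by
  simp only [W0, ContinuousLinearMap.comp_apply, ContinuousLinearEquiv.coe_coe, mul_one_fun,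
    ContinuousLinearMap.coe_id', id_eq]
  exact F.equiv.symm_apply_apply f

theorem reflect_W0 (F : FourierL2) {x : ℝ → ℂ} (hx : MemLp x ⊤ (volume : Measure ℝ)) (f : L2) :
    reflect (W0 F x f) = W0 F (fun t => x (-t)) (reflect f) := by
  simp only [W0, ContinuousLinearMap.comp_apply, ContinuousLinearEquiv.coe_coe]
  rw [← fourier_symm_reflect, reflect_mul hx, ← fourier_reflect]

theorem chiPlus_add_neg {t : ℝ} (ht : t ≠ 0) : chiPlus t + chiPlus (-t) = 1 := by
  rcases lt_trichotomy t 0 with h | h | h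
  · rw [chiPlus, Set.indicator_of_notMem (by simpa using h.le),
      Set.indicator_of_mem (by simpa using h), zero_add]
  · exact absurd h ht
  · rw [chiPlus, Set.indicator_of_mem (by simpa using h),
      Set.indicator_of_notMem (by simpa using h.le), add_zero]

theorem mulChi_of_mem (f : L2) (hf : f ∈ posSubspace) : mul chiPlus f = f := by
  apply Lp.ext
  filter_upwards [mul_coeFn chiPlus_memℒp f, hf, ae_ne_zero] with t h1 h2 h3
  rw [h1]
  rcases lt_trichotomy t 0 with h | h | h
  · rw [h2 h, mul_zero]
  · exact absurd h h3
  · rw [chiPlus, Set.indicator_of_mem (by simpa using h), one_mul]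

theorem mulChi_reflect_of_mem (f : L2) (hf : f ∈ posSubspace) :
    mul chiPlus (reflect f) = 0 := by
  apply Lp.ext
  have hf' : ∀ᵐ t : ℝ ∂(volume : Measure ℝ), -t < 0 → (f : ℝ → ℂ) (-t) = 0 :=
    negMP.quasiMeasurePreserving.ae hf
  filter_upwards [mul_coeFn chiPlus_memℒp (reflect f), reflect_coeFn f, hf',
    Lp.coeFn_zero ℂ 2 (volume : Measure ℝ), ae_ne_zero] with t h1 h2 h3 h4 h5
  rw [h1, h2, h4]
  rcases lt_trichotomy t 0 with h | h | h
  · rw [chiPlus, Set.indicator_of_notMem (by simpa using h.le), zero_mul]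
    rfl
  · exact absurd h h5
  · rw [h3 (by linarith), mul_zero]
    rfl

theorem mulChi_add_reflect (ψ : L2) (hψ : reflect ψ = ψ) :
    mul chiPlus ψ + reflect (mul chiPlus ψ) = ψ := by
  apply Lp.ext
  have hψ' : (fun t => (ψ : ℝ → ℂ) (-t)) =ᵐ[(volume : Measure ℝ)] (ψ : ℝ → ℂ) :=
    (reflect_coeFn ψ).symm.trans (by rw [hψ])
  filter_upwards [Lp.coeFn_add (mul chiPlus ψ) (reflect (mul chiPlus ψ)),
    mul_coeFn chiPlus_memℒp ψ, reflect_coeFn (mul chiPlus ψ),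
    negMP.quasiMeasurePreserving.ae_eq (mul_coeFn chiPlus_memℒp ψ),
    hψ', ae_ne_zero] with t h1 h2 h3 h4 h5 h6
  simp only [Function.comp_apply] at h4
  rw [h1, Pi.add_apply, h2, h3, h4, h5]
  rw [← add_mul, chiPlus_add_neg h6, one_mul]

theorem reflect_mem_pos_of_mulChi_eq_zero (u : L2) (hu : mul chiPlus u = 0) :
    reflect u ∈ posSubspace := by
  have hzero : (mul chiPlus u : ℝ → ℂ) =ᵐ[(volume : Measure ℝ)] (fun _ => (0 : ℂ)) := by
    rw [hu]
    exact (Lp.coeFn_zero ℂ 2 (volume : Measure ℝ)).mono fun t ht => by rw [ht]; rfl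
  have h : ∀ᵐ t : ℝ ∂(volume : Measure ℝ), chiPlus t * (u : ℝ → ℂ) t = 0 := by
    filter_upwards [mul_coeFn chiPlus_memℒp u, hzero] with t h1 h2
    rw [← h1, h2]
  have h2 : ∀ᵐ t : ℝ ∂(volume : Measure ℝ), 0 < t → (u : ℝ → ℂ) t = 0 := by
    filter_upwards [h] with t ht hpos
    rwa [chiPlus, Set.indicator_of_mem (by simpa using hpos), one_mul] at ht
  have h3 : ∀ᵐ t : ℝ ∂(volume : Measure ℝ), 0 < -t → (u : ℝ → ℂ) (-t) = 0 :=
    negMP.quasiMeasurePreserving.ae h2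
  filter_upwards [reflect_coeFn u, h3] with t h4 h5 hlt
  rw [h4, h5 (by linarith)]



theorem W_apply (F : FourierL2) (x : ℝ → ℂ) (φ : Lp2Plus) :
    (W F x φ : L2) = mul chiPlus (W0 F x (φ : L2)) := rfl

theorem H_apply (F : FourierL2) (x : ℝ → ℂ) (φ : Lp2Plus) :
    (H F x φ : L2) = mul chiPlus (W0 F x (reflect (φ : L2))) := rfl

/-- If `a` is invertible in `L^∞(ℝ)` and `W(a ã⁻¹)` is invertible, then `W(a)+H(a)` is
invertible with inverse `(W(ã⁻¹) + H(a⁻¹)) W(a ã⁻¹)⁻¹`. -/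
theorem inverse_W_plus_H_same_symbol
    (F : FourierL2) (a : ℝ → ℂ) (ha : InvertibleLinf a)
    (E : Lp2Plus →L[ℂ] Lp2Plus)
    (hE1 : (W F (fun t => a t * (a (-t))⁻¹)).comp E = 1)
    (hE2 : E.comp (W F (fun t => a t * (a (-t))⁻¹)) = 1)
    (K : Lp2Plus →L[ℂ] Lp2Plus)
    (hK : K = (W F (fun t => (a (-t))⁻¹) + H F (fun t => (a t)⁻¹)).comp E) :
    (W F a + H F a).comp K = 1 ∧ K.comp (W F a + H F a) = 1 := by
  obtain ⟨haM, haNZ, haIM⟩ := ha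
  have hmb : MemLp (fun t => (a (-t))⁻¹) ⊤ (volume : Measure ℝ) := by
    have := memℒp_top_reflect haIM
    simpa using this
  have hmc : MemLp (fun t => a t * (a (-t))⁻¹) ⊤ (volume : Measure ℝ) := memℒp_top_mul haM hmb
  have hmt : MemLp (fun t => a (-t)) ⊤ (volume : Measure ℝ) := memℒp_top_reflect haM
  have haNZ' : ∀ᵐ t : ℝ ∂(volume : Measure ℝ), a (-t) ≠ 0 :=
    negMP.quasiMeasurePreserving.ae haNZ
  -- product of the two symbols a and a⁻¹ (either order) is a.e. 1
  have had1 : (fun t => a t * (a t)⁻¹) =ᵐ[(volume : Measure ℝ)] (fun _ => (1 : ℂ)) := by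
    filter_upwards [haNZ] with t ht
    exact mul_inv_cancel₀ ht
  have hda1 : (fun t => (a t)⁻¹ * a t) =ᵐ[(volume : Measure ℝ)] (fun _ => (1 : ℂ)) := by
    filter_upwards [haNZ] with t ht
    exact inv_mul_cancel₀ ht
  -- Step 1 : (W a + H a) ∘ (W ã⁻¹ + H a⁻¹) = W (a ã⁻¹)
  have step1 : ∀ φ : Lp2Plus, (W F a + H F a)
      ((W F (fun t => (a (-t))⁻¹) + H F (fun t => (a t)⁻¹)) φ)
      = W F (fun t => a t * (a (-t))⁻¹) φ := by
    intro φ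
    apply Subtype.ext
    set φ0 : L2 := (φ : L2) with hφ0
    set ψ : L2 := W0 F (fun t => (a (-t))⁻¹) φ0 + W0 F (fun t => (a t)⁻¹) (reflect φ0)
      with hψdef
    have hν : ((W F (fun t => (a (-t))⁻¹) + H F (fun t => (a t)⁻¹)) φ : L2)
        = mul chiPlus ψ := by
      rw [ContinuousLinearMap.add_apply]
      rw [Submodule.coe_add, W_apply, H_apply, ← map_add]
    -- ψ is even
    have hψeven : reflect ψ = ψ := by
      rw [hψdef, map_add, reflect_W0 F hmb φ0, reflect_W0 F haIM (reflect φ0),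
        reflect_reflect]
      have e1 : (fun t : ℝ => (a (- -t))⁻¹) = fun t => (a t)⁻¹ := by
        funext t; rw [neg_neg]
      rw [e1, add_comm]
    -- key additive identity
    have hkey : (mul chiPlus ψ) + reflect (mul chiPlus ψ) = ψ :=
      mulChi_add_reflect ψ hψeven
    -- compute
    show ((W F a + H F a) ((W F (fun t => (a (-t))⁻¹) + H F (fun t => (a t)⁻¹)) φ) : L2)
        = (W F (fun t => a t * (a (-t))⁻¹) φ : L2)
    rw [ContinuousLinearMap.add_apply, Submodule.coe_add, W_apply, H_apply, hν,
      ← map_add, ← map_add, hkey, W_apply]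
    rw [hψdef, map_add, W0_apply_mul F haM hmb φ0, W0_apply_mul F haM haIM (reflect φ0),
      W0_congr F had1, W0_one, map_add, mulChi_reflect_of_mem φ0 φ.2, add_zero]
  -- first statement
  have first : (W F a + H F a).comp K = 1 := by
    refine ContinuousLinearMap.ext fun φ => ?_
    rw [hK]
    simp only [ContinuousLinearMap.comp_apply, ContinuousLinearMap.one_apply]
    rw [step1 (E φ), ← ContinuousLinearMap.comp_apply, hE1, ContinuousLinearMap.one_apply]
  refine ⟨first, ?_⟩
  -- injectivity of W(c)
  have hWc_inj : Function.Injective (W F (fun t => a t * (a (-t))⁻¹)) := by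
    intro x y hxy
    have hx := congrArg E hxy
    rwa [← ContinuousLinearMap.comp_apply, ← ContinuousLinearMap.comp_apply, hE2,
      ContinuousLinearMap.one_apply, ContinuousLinearMap.one_apply] at hx
  -- injectivity of W(a) + H(a)
  have hM_inj : Function.Injective (W F a + H F a) := by
    rw [injective_iff_map_eq_zero]
    intro φ hMφ
    set φ0 : L2 := (φ : L2) with hφ0
    set ψ : L2 := φ0 + reflect φ0 with hψdef
    set u : L2 := W0 F a ψ with hudef
    have hu : mul chiPlus u = 0 := by
      have h1 : ((W F a + H F a) φ : L2) = mul chiPlus u := by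
        rw [ContinuousLinearMap.add_apply, Submodule.coe_add, W_apply, H_apply,
          hudef, hψdef, map_add (W0 F a), map_add (mul chiPlus)]
      rw [← h1, hMφ]
      rfl
    have hvmem : reflect u ∈ posSubspace := reflect_mem_pos_of_mulChi_eq_zero u hu
    have hψeven : reflect ψ = ψ := by
      rw [hψdef, map_add, reflect_reflect, add_comm]
    have hveq : reflect u = W0 F (fun t => a (-t)) ψ := by
      rw [hudef, reflect_W0 F haM ψ, hψeven]
    have hWcv : W F (fun t => a t * (a (-t))⁻¹) ⟨reflect u, hvmem⟩ = 0 := by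
      apply Subtype.ext
      rw [W_apply]
      show mul chiPlus (W0 F (fun t => a t * (a (-t))⁻¹) (reflect u)) = 0
      rw [hveq, W0_apply_mul F hmc hmt ψ]
      have hca : (fun t => (a t * (a (-t))⁻¹) * a (-t)) =ᵐ[(volume : Measure ℝ)] a := by
        filter_upwards [haNZ'] with t ht
        field_simp
      rw [W0_congr F hca]
      exact hu
    have hv0 : (⟨reflect u, hvmem⟩ : Lp2Plus) = 0 := by
      apply hWc_inj
      rw [hWcv, map_zero]
    have hru0 : reflect u = 0 := congrArg Subtype.val hv0
    have hu0 : u = 0 := by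
      rw [← reflect_reflect u, hru0, map_zero]
    have hψ0 : ψ = 0 := by
      have h1 : W0 F (fun t => (a t)⁻¹) u = ψ := by
        rw [hudef, W0_apply_mul F haIM haM ψ, W0_congr F hda1, W0_one]
      rw [← h1, hu0, map_zero]
    have hφ00 : φ0 = 0 := by
      have h2 : mul chiPlus ψ = φ0 := by
        rw [hψdef, map_add, mulChi_of_mem φ0 φ.2, mulChi_reflect_of_mem φ0 φ.2, add_zero]
      rw [hψ0, map_zero] at h2
      exact h2.symm
    exact Subtype.ext hφ00
  -- second statement
  refine ContinuousLinearMap.ext fun φ => ?_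
  simp only [ContinuousLinearMap.comp_apply, ContinuousLinearMap.one_apply]
  apply hM_inj
  rw [← ContinuousLinearMap.comp_apply (W F a + H F a) K, first,
    ContinuousLinearMap.one_apply]


end WienerHopf
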